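/- arXiv:math/9606222 — 3 statements merged into one kernel-verified Lean document; each statement's English description precedes it below -/
import Mathlib

section
/- Let f : ℂ → ℂ be an entire function (e.g. a polynomial), let δ > 0, and let μ be a δ-conformal measure for f. If w ∈ ℂ is a periodic point of f of period p (f^p(w) = w) which is expanding, i.e. |(f^p)'(w)| > 1, then μ({w}) = 0. -/
open MeasureTheory

/-- A `δ`-conformal measure for `f : ℂ → ℂ` is a Borel probability measure `μ` such that
`μ (f '' A) = ∫_A |f'(z)|^δ dμ(z)` for every Borel set `A` on which `f` is injective. -/
def IsConformalMeasure (f : ℂ → ℂ) (δ : ℝ) (μ : Measure ℂ) : Prop :=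
  IsProbabilityMeasure μ ∧
    ∀ A : Set ℂ, MeasurableSet A → Set.InjOn f A →
      μ (f '' A) = ∫⁻ z in A, ENNReal.ofReal (‖deriv f z‖ ^ δ) ∂μ

lemma deriv_iterate_prod (f : ℂ → ℂ) (hf : Differentiable ℂ f) (n : ℕ) (x : ℂ) :
    deriv (f^[n]) x = ∏ i ∈ Finset.range n, deriv f (f^[i] x) := by
  induction n with
  | zero => simp
  | succ n ih =>
    rw [Function.iterate_succ', Finset.prod_range_succ,
      deriv_comp _ (hf _) ((hf.iterate n).differentiableAt), ih]
    ring

/-- An expanding (repelling) periodic point carries zero `δ`-conformal measure. -/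
theorem expanding_periodic_point_null (f : ℂ → ℂ) (hf : Differentiable ℂ f)
    (δ : ℝ) (hδ : 0 < δ) (μ : Measure ℂ) (hμ : IsConformalMeasure f δ μ)
    (w : ℂ) (p : ℕ) (hp : 1 ≤ p) (hper : f^[p] w = w)
    (hexp : 1 < ‖deriv (f^[p]) w‖) :
    μ {w} = 0 := by
  obtain ⟨hprob, hconf⟩ := hμ
  -- measure of singleton transforms by the conformal factor
  have hstep : ∀ z : ℂ, μ {f z} =
      ENNReal.ofReal (‖deriv f z‖ ^ δ) * μ {z} := by
    intro z
    have := hconf {z} (measurableSet_singleton z) (Set.injOn_singleton f z)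
    rw [Set.image_singleton, lintegral_singleton] at this
    rw [this, mul_comm]
  have horbit : ∀ n : ℕ, μ {f^[n] w} =
      (∏ i ∈ Finset.range n,
        ENNReal.ofReal (‖deriv f (f^[i] w)‖ ^ δ)) * μ {w} := by
    intro n
    induction n with
    | zero => simp
    | succ n ih =>
      rw [Function.iterate_succ_apply', hstep, ih, Finset.prod_range_succ]
      ring
  have key := horbit p
  rw [hper] at key
  -- identify the product with the derivative of the iterate
  have hprod : (∏ i ∈ Finset.range p,
      ENNReal.ofReal (‖deriv f (f^[i] w)‖ ^ δ)) =
      ENNReal.ofReal (‖deriv (f^[p]) w‖ ^ δ) := by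
    rw [← ENNReal.ofReal_prod_of_nonneg
      (fun i _ => Real.rpow_nonneg (norm_nonneg _) δ)]
    congr 1
    rw [Real.finset_prod_rpow _ _ (fun i _ => norm_nonneg _) δ]
    congr 1
    rw [deriv_iterate_prod f hf p w, norm_prod]
  rw [hprod] at key
  -- conclude
  by_contra h0
  have hfin : μ {w} ≠ ⊤ := (measure_lt_top μ _).ne
  have hC : 1 < ENNReal.ofReal (‖deriv (f^[p]) w‖ ^ δ) :=
    ENNReal.one_lt_ofReal.mpr
      ((Real.one_lt_rpow_iff_of_pos (lt_trans one_pos hexp)).mpr (Or.inl ⟨hexp, hδ⟩))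
  have : μ {w} < ENNReal.ofReal (‖deriv (f^[p]) w‖ ^ δ) * μ {w} := by
    calc μ {w} = 1 * μ {w} := (one_mul _).symm
    _ < _ := by
      simpa only [mul_comm] using ENNReal.mul_lt_mul_right h0 hfin hC
  exact absurd key (ne_of_lt this)
end

section
/- Let f : ℂ → ℂ be a nonconstant polynomial map, let δ > 0, and let μ be a δ-conformal measure for f. Let w ∈ ℂ be an expanding periodic point of f, i.e. f^p(w) = w and |(f^p)'(w)| > 1 for some p ≥ 1. Assume that no preimage of w is a critical point of f, i.e. f'(z) ≠ 0 for every z with f^n(z) = w for some n ≥ 0. Then the set of all preimages of w, namely {z ∈ ℂ : f^n(z) = w for some n ≥ 0}, has μ-measure zero. -/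
open MeasureTheory

/-- For a nonconstant polynomial `f`, the set of all preimages of an expanding periodic
point `w` (none of whose preimages is a critical point) has zero `δ`-conformal measure. -/
theorem preimages_of_expanding_periodic_point_null (f : ℂ → ℂ)
    (hpoly : ∃ P : Polynomial ℂ, 0 < P.degree ∧ ∀ z, f z = P.eval z)
    (δ : ℝ) (hδ : 0 < δ) (μ : Measure ℂ) (hμ : IsConformalMeasure f δ μ)
    (w : ℂ) (p : ℕ) (hp : 1 ≤ p) (hper : f^[p] w = w)
    (hexp : 1 < ‖deriv (f^[p]) w‖)
    (hcrit : ∀ z : ℂ, (∃ n : ℕ, f^[n] z = w) → deriv f z ≠ 0) :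
    μ {z : ℂ | ∃ n : ℕ, f^[n] z = w} = 0 := by
  obtain ⟨P, hPdeg, hPf⟩ := hpoly
  have hfP : f = fun z => P.eval z := funext hPf
  have hdiff : Differentiable ℂ f := by
    rw [hfP]; exact P.differentiable
  obtain ⟨hprob, hconf⟩ := hμ
  -- conformal relation for singletons
  have hsing : ∀ z : ℂ,
      μ {f z} = ENNReal.ofReal (‖deriv f z‖ ^ δ) * μ {z} := by
    intro z
    have h := hconf {z} (measurableSet_singleton z) (Set.Subsingleton.injOn (by simp) f)
    rw [Set.image_singleton, lintegral_singleton] at h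
    exact h
  -- μ of orbit points of w
  have hiter : ∀ k : ℕ,
      μ {f^[k] w} = ENNReal.ofReal (‖deriv (f^[k]) w‖ ^ δ) * μ {w} := by
    intro k
    induction k with
    | zero => simp [Function.iterate_zero]
    | succ k ih =>
        have hcomp : f^[k + 1] = f ∘ f^[k] := Function.iterate_succ' f k
        have hd : deriv (f^[k + 1]) w = deriv f (f^[k] w) * deriv (f^[k]) w := by
          rw [hcomp]
          exact deriv_comp w (hdiff.differentiableAt) ((hdiff.iterate k).differentiableAt)
        have h1 : μ {f^[k + 1] w} = ENNReal.ofReal (‖deriv f (f^[k] w)‖ ^ δ)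
            * μ {f^[k] w} := by
          rw [Function.iterate_succ_apply' f k w]
          exact hsing _
        rw [h1, ih, ← mul_assoc, ← ENNReal.ofReal_mul (by positivity), hd, norm_mul,
          Real.mul_rpow (by positivity) (by positivity)]
  -- μ {w} = 0
  have hw : μ {w} = 0 := by
    have hkey := hiter p
    rw [hper] at hkey
    by_contra h0
    have hμw_lt : μ {w} < ⊤ := lt_of_le_of_lt (measure_mono (Set.subset_univ _))
      (by simp [hprob.measure_univ])
    have hc : (1 : ENNReal) < ENNReal.ofReal (‖deriv (f^[p]) w‖ ^ δ) := by
      rw [ENNReal.one_lt_ofReal]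
      exact (Real.one_lt_rpow_iff_of_pos (lt_trans one_pos hexp)).mpr (Or.inl ⟨hexp, hδ⟩)
    have : μ {w} < ENNReal.ofReal (‖deriv (f^[p]) w‖ ^ δ) * μ {w} := by
      calc μ {w} = 1 * μ {w} := (one_mul _).symm
      _ < _ := by
        rw [mul_comm (1 : ENNReal), mul_comm (ENNReal.ofReal _) (μ {w})]
        exact ENNReal.mul_lt_mul_right h0 hμw_lt.ne hc
    rw [← hkey] at this
    exact lt_irrefl _ this
  -- preimages have measure zero
  have hpre : ∀ n : ℕ, ∀ z : ℂ, f^[n] z = w → μ {z} = 0 := by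
    intro n
    induction n with
    | zero => intro z hz; simp only [Function.iterate_zero, id_eq] at hz; rw [hz]; exact hw
    | succ n ih =>
        intro z hz
        rw [Function.iterate_succ_apply f n z] at hz
        have hfz : μ {f z} = 0 := ih (f z) hz
        rw [hsing z] at hfz
        have hne : ENNReal.ofReal (‖deriv f z‖ ^ δ) ≠ 0 := by
          have hd0 : deriv f z ≠ 0 := hcrit z ⟨n + 1, by
            rw [Function.iterate_succ_apply f n z]; exact hz⟩
          have : (0:ℝ) < ‖deriv f z‖ ^ δ :=
            Real.rpow_pos_of_pos (by simpa using hd0) δ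
          simpa [ENNReal.ofReal_eq_zero, not_le] using this
        exact (mul_eq_zero.mp hfz).resolve_left hne
  -- countability of the preimage set
  have hcount : {z : ℂ | ∃ n : ℕ, f^[n] z = w}.Countable := by
    have : {z : ℂ | ∃ n : ℕ, f^[n] z = w} = ⋃ n : ℕ, {z : ℂ | f^[n] z = w} := by
      ext z; simp
    rw [this]
    refine Set.countable_iUnion fun n => Set.Finite.countable ?_
    -- f^[n] is a polynomial of positive degree
    have : ∀ n : ℕ, ∃ Q : Polynomial ℂ, 0 < Q.degree ∧ ∀ z, f^[n] z = Q.eval z := by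
      intro n
      induction n with
      | zero => exact ⟨Polynomial.X, by simp, by simp⟩
      | succ n ih =>
          obtain ⟨Q, hQ, hQf⟩ := ih
          refine ⟨Q.comp P, ?_, fun z => ?_⟩
          · rw [← Polynomial.natDegree_pos_iff_degree_pos] at hQ hPdeg ⊢
            rw [Polynomial.natDegree_comp]
            exact Nat.mul_pos hQ hPdeg
          · rw [Function.iterate_succ_apply f n z, Polynomial.eval_comp, ← hPf, ← hQf]
    obtain ⟨Q, hQ, hQf⟩ := this n
    have hne : Q - Polynomial.C w ≠ 0 := by
      intro h
      have hQC : Q = Polynomial.C w := sub_eq_zero.mp h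
      rw [← Polynomial.natDegree_pos_iff_degree_pos] at hQ
      rw [hQC, Polynomial.natDegree_C] at hQ
      exact lt_irrefl 0 hQ
    have := Polynomial.finite_setOf_isRoot hne
    refine this.subset fun z hz => ?_
    simp only [Set.mem_setOf_eq, Polynomial.IsRoot, Polynomial.eval_sub, Polynomial.eval_C,
      sub_eq_zero]
    rw [← hQf]; exact hz
  -- conclude
  have : {z : ℂ | ∃ n : ℕ, f^[n] z = w} = ⋃ z ∈ {z : ℂ | ∃ n : ℕ, f^[n] z = w}, {z} :=
    (Set.biUnion_of_singleton _).symm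
  rw [this, measure_biUnion_null_iff hcount]
  rintro z ⟨n, hz⟩
  exact hpre n z hz
end

section
/- Let f : ℂ → ℂ be an entire function, δ > 0, and μ a δ-conformal measure for f. Let A ⊆ ℂ be a Borel set which is forward invariant, f(A) ⊆ A. Let x ∈ ℂ, and let η > 0, c > 0, K ≥ 1 be constants. Suppose there is a sequence of integers k_j → ∞ such that, writing y_j = f^{k_j}(x), there exist injective holomorphic maps g_j defined on the open ball B(y_j, η) with: (a) g_j(y_j) = x and f^{k_j}(g_j(ζ)) = ζ for all ζ ∈ B(y_j, η); (b) setting λ_j = |g_j'(y_j)|, one has K^{-1}·λ_j ≤ |g_j'(ζ)| ≤ K·λ_j for all ζ ∈ B(y_j, η); (c) g_j(B(y_j, η/2)) ⊆ B(x, K·λ_j·η/2) ⊆ g_j(B(y_j, η)); (d) μ(B(y_j, η/2) \ A) ≥ c; and (e) λ_j → 0 as j → ∞. Then limsup_{r → 0} μ(B(x,r) \ A)/μ(B(x,r)) ≥ K^{-2δ}·c > 0; in particular, x is not a μ-Lebesgue density point of A. -/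
open MeasureTheory Metric Filter

/-- The conformal density for a map `F`. -/
noncomputable def confDens (δ : ℝ) (F : ℂ → ℂ) (z : ℂ) : ENNReal :=
  ENNReal.ofReal (‖deriv F z‖ ^ δ)

lemma confDens_measurable {δ : ℝ} (hδ : 0 ≤ δ) (F : ℂ → ℂ) : Measurable (confDens δ F) := by
  apply ENNReal.measurable_ofReal.comp
  have h1 : Measurable (deriv F) := measurable_deriv F
  have h2 : Measurable fun z => ‖deriv F z‖ := by
    exact h1.norm
  exact (Real.continuous_rpow_const hδ).measurable.comp h2

/-- Chain rule for derivatives of iterates. -/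
lemma deriv_iterate_succ {f : ℂ → ℂ} (hf : Differentiable ℂ f) (n : ℕ) (z : ℂ) :
    deriv (f^[n + 1]) z = deriv f (f^[n] z) * deriv (f^[n]) z := by
  have hfn : HasDerivAt (f^[n]) (deriv (f^[n]) z) z :=
    ((hf.iterate n) z).hasDerivAt
  have hcomp : HasDerivAt (f ∘ f^[n]) (deriv f (f^[n] z) * deriv (f^[n]) z) z :=
    ((hf (f^[n] z)).hasDerivAt).comp z hfn
  rw [Function.iterate_succ' f n]
  exact hcomp.deriv

/-- withDensity commutes with map. -/
lemma withDensity_map_aux {F : ℂ → ℂ} (hF : Measurable F) (ν : Measure ℂ)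
    {h : ℂ → ENNReal} (hh : Measurable h) :
    (Measure.map F ν).withDensity h = Measure.map F (ν.withDensity (h ∘ F)) := by
  ext E hE
  rw [withDensity_apply _ hE, Measure.map_apply hF hE,
    withDensity_apply _ (hF hE), setLIntegral_map hE hh hF]
  rfl

/-- One-step conformal transport formula. -/
lemma conformal_restrict_map_one {f : ℂ → ℂ} (hf : Differentiable ℂ f) {δ : ℝ}
    {μ : Measure ℂ} (hμ : IsConformalMeasure f δ μ) (S : Set ℂ) (hS : MeasurableSet S)
    (hinj : Set.InjOn f S) :
    μ.restrict (f '' S) = Measure.map f ((μ.restrict S).withDensity (confDens δ f)) := by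
  have hfm : Measurable f := hf.continuous.measurable
  ext E hE
  have hpre : MeasurableSet (f ⁻¹' E) := hfm hE
  have hset : E ∩ f '' S = f '' (S ∩ f ⁻¹' E) := by
    ext w
    constructor
    · rintro ⟨hwE, s, hs, rfl⟩
      exact ⟨s, ⟨hs, hwE⟩, rfl⟩
    · rintro ⟨s, ⟨hs, hsE⟩, rfl⟩
      exact ⟨hsE, s, hs, rfl⟩
  rw [Measure.restrict_apply hE, hset, hμ.2 (S ∩ f ⁻¹' E) (hS.inter hpre)
    (hinj.mono Set.inter_subset_left), Measure.map_apply hfm hE,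
    withDensity_apply _ hpre, Measure.restrict_restrict hpre, Set.inter_comm]
  rfl

/-- Iterated conformal transport formula. -/
lemma conformal_restrict_map {f : ℂ → ℂ} (hf : Differentiable ℂ f) {δ : ℝ} (hδ : 0 < δ)
    {μ : Measure ℂ} (hμ : IsConformalMeasure f δ μ) (n : ℕ) (S : Set ℂ)
    (hS : MeasurableSet S) (hinj : Set.InjOn (f^[n]) S) :
    μ.restrict (f^[n] '' S) =
      Measure.map (f^[n]) ((μ.restrict S).withDensity (confDens δ (f^[n]))) := by
  induction n with
  | zero =>
    have h0 : (confDens δ (f^[0]) : ℂ → ENNReal) = 1 := by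
      funext z
      simp [confDens, Function.iterate_zero, deriv_id, Real.one_rpow]
    rw [h0, withDensity_one]
    simp [Function.iterate_zero, Set.image_id, Measure.map_id]
  | succ n IH =>
    have hfm : Measurable f := hf.continuous.measurable
    have hfnm : Measurable (f^[n]) := hfm.iterate n
    have hinjn : Set.InjOn (f^[n]) S := by
      intro a ha b hb hab
      apply hinj ha hb
      rw [Function.iterate_succ_apply' f n a, Function.iterate_succ_apply' f n b, hab]
    have hinjf : Set.InjOn f (f^[n] '' S) := by
      rintro _ ⟨a, ha, rfl⟩ _ ⟨b, hb, rfl⟩ hab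
      have : f^[n + 1] a = f^[n + 1] b := by
        rwa [Function.iterate_succ_apply' f n a, Function.iterate_succ_apply' f n b]
      rw [hinj ha hb this]
    have hSn : MeasurableSet (f^[n] '' S) :=
      hS.image_of_continuousOn_injOn (hf.iterate n).continuous.continuousOn hinjn
    have him : f^[n + 1] '' S = f '' (f^[n] '' S) := by
      rw [← Set.image_comp, ← Function.iterate_succ' f n]
    rw [him, conformal_restrict_map_one hf hμ _ hSn hinjf, IH hinjn,
      withDensity_map_aux hfnm _ (confDens_measurable hδ.le f),
      Measure.map_map hfm hfnm, ← Function.iterate_succ' f n,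
      ← withDensity_mul _ (confDens_measurable hδ.le _) ((confDens_measurable hδ.le f).comp hfnm)]
    have hfun : (confDens δ (f^[n]) * confDens δ f ∘ f^[n]) = confDens δ (f^[n + 1]) := by
      funext z
      simp only [Pi.mul_apply, Function.comp_apply, confDens]
      rw [deriv_iterate_succ hf n z, norm_mul, Real.mul_rpow (norm_nonneg _)
        (norm_nonneg _), ENNReal.ofReal_mul (Real.rpow_nonneg (norm_nonneg _) _),
        mul_comm]
    rw [hfun]

/-- Conformal measure formula for iterates. -/
lemma conformal_iterate {f : ℂ → ℂ} (hf : Differentiable ℂ f) {δ : ℝ} (hδ : 0 < δ)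
    {μ : Measure ℂ} (hμ : IsConformalMeasure f δ μ) (n : ℕ) (S : Set ℂ)
    (hS : MeasurableSet S) (hinj : Set.InjOn (f^[n]) S) :
    μ (f^[n] '' S) = ∫⁻ z in S, confDens δ (f^[n]) z ∂μ := by
  have := congrArg (fun ν : Measure ℂ => ν Set.univ)
    (conformal_restrict_map hf hδ hμ n S hS hinj)
  simpa [Measure.restrict_apply_univ, Measure.map_apply (((hf.continuous.measurable).iterate n))
    MeasurableSet.univ, withDensity_apply _ MeasurableSet.univ, Measure.restrict_univ] using this

lemma iterate_mem_of_forward_invariant {f : ℂ → ℂ} {A : Set ℂ} (hAinv : f '' A ⊆ A)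
    (n : ℕ) {a : ℂ} (ha : a ∈ A) : f^[n] a ∈ A := by
  induction n with
  | zero => simpa using ha
  | succ n IH =>
    rw [Function.iterate_succ_apply' f n a]
    exact hAinv ⟨_, IH, rfl⟩

/-- Quantitative pull-back estimate: univalent inverse branches with bounded distortion
along a sequence of iterates transport a definite amount of the complement of a forward
invariant set `A` back to every scale at `x`; hence `x` is not a density point of `A`. -/
theorem not_density_point_of_pullback (f : ℂ → ℂ) (hf : Differentiable ℂ f)
    (δ : ℝ) (hδ : 0 < δ) (μ : Measure ℂ) (hμ : IsConformalMeasure f δ μ)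
    (A : Set ℂ) (hA : MeasurableSet A) (hAinv : f '' A ⊆ A)
    (x : ℂ) (η c K : ℝ) (hη : 0 < η) (hc : 0 < c) (hK : 1 ≤ K)
    (k : ℕ → ℕ) (hk : Tendsto k atTop atTop)
    (g : ℕ → ℂ → ℂ) (lam : ℕ → ℝ)
    (hlam : ∀ j, lam j = ‖deriv (g j) (f^[k j] x)‖)
    (hghol : ∀ j, DifferentiableOn ℂ (g j) (ball (f^[k j] x) η))
    (hginj : ∀ j, Set.InjOn (g j) (ball (f^[k j] x) η))
    (hgx : ∀ j, g j (f^[k j] x) = x)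
    (hginv : ∀ j, ∀ ζ ∈ ball (f^[k j] x) η, f^[k j] (g j ζ) = ζ)
    (hgdist : ∀ j, ∀ ζ ∈ ball (f^[k j] x) η,
      K⁻¹ * lam j ≤ ‖deriv (g j) ζ‖ ∧
        ‖deriv (g j) ζ‖ ≤ K * lam j)
    (hgball : ∀ j,
      g j '' ball (f^[k j] x) (η / 2) ⊆ ball x (K * lam j * η / 2) ∧
        ball x (K * lam j * η / 2) ⊆ g j '' ball (f^[k j] x) η)
    (hmeas : ∀ j, ENNReal.ofReal c ≤ μ (ball (f^[k j] x) (η / 2) \ A))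
    (hlam0 : Tendsto lam atTop (nhds 0)) :
    ENNReal.ofReal (K ^ (-(2 * δ)) * c) ≤
        limsup (fun r : ℝ => μ (ball x r \ A) / μ (ball x r)) (nhdsWithin 0 (Set.Ioi 0)) ∧
      ¬ Tendsto (fun r : ℝ => μ (ball x r ∩ A) / μ (ball x r))
          (nhdsWithin 0 (Set.Ioi 0)) (nhds 1) := by
  haveI : IsProbabilityMeasure μ := hμ.1
  have hK0 : (0 : ℝ) < K := lt_of_lt_of_le one_pos hK
  -- positivity of lam
  have hlampos : ∀ j, 0 < lam j := by
    intro j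
    have hx : x ∈ ball x (K * lam j * η / 2) := by
      have h1 : f^[k j] x ∈ ball (f^[k j] x) (η / 2) := mem_ball_self (by positivity)
      exact (hgball j).1 ⟨_, h1, hgx j⟩
    rw [mem_ball, dist_self] at hx
    by_contra hneg
    push_neg at hneg
    nlinarith [mul_pos hK0 hη]
  set r : ℕ → ℝ := fun j => K * lam j * η / 2 with hr
  have hrpos : ∀ j, 0 < r j := fun j => by
    have := hlampos j; simp only [hr]; positivity
  -- the key ratio bound along the sequence r j
  have key : ∀ j, ENNReal.ofReal (K ^ (-(2 * δ)) * c) ≤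
      μ (ball x (r j) \ A) / μ (ball x (r j)) := by
    intro j
    set y := f^[k j] x with hy
    have hlp := hlampos j
    have hcont : ContinuousOn (g j) (ball y η) := (hghol j).continuousOn
    -- chain rule relation on the ball
    have hchain : ∀ ζ ∈ ball y η,
        deriv (f^[k j]) (g j ζ) * deriv (g j) ζ = 1 := by
      intro ζ hζ
      have hg' : HasDerivAt (g j) (deriv (g j) ζ) ζ :=
        ((hghol j).differentiableAt (isOpen_ball.mem_nhds hζ)).hasDerivAt
      have hfn : HasDerivAt (f^[k j]) (deriv (f^[k j]) (g j ζ)) (g j ζ) :=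
        ((hf.iterate (k j)) (g j ζ)).hasDerivAt
      have hcomp : HasDerivAt (f^[k j] ∘ g j)
          (deriv (f^[k j]) (g j ζ) * deriv (g j) ζ) ζ := hfn.comp ζ hg'
      have heq : (f^[k j] ∘ g j) =ᶠ[nhds ζ] id := by
        filter_upwards [isOpen_ball.mem_nhds hζ] with w hw
        exact hginv j w hw
      have hid : HasDerivAt (id : ℂ → ℂ)
          (deriv (f^[k j]) (g j ζ) * deriv (g j) ζ) ζ :=
        hcomp.congr_of_eventuallyEq heq.symm
      exact hid.unique (hasDerivAt_id ζ)
    -- bounds on |deriv f^[k j]| on the image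
    have hgd' : ∀ ζ ∈ ball y η, 0 < ‖deriv (g j) ζ‖ := by
      intro ζ hζ
      have := (hgdist j ζ hζ).1
      have : (0 : ℝ) < K⁻¹ * lam j := by positivity
      linarith [(hgdist j ζ hζ).1]
    have habs : ∀ ζ ∈ ball y η,
        ‖deriv (f^[k j]) (g j ζ)‖ * ‖deriv (g j) ζ‖ = 1 := by
      intro ζ hζ
      rw [← norm_mul, hchain ζ hζ, norm_one]
    have hupper : ∀ ζ ∈ ball y η,
        ‖deriv (f^[k j]) (g j ζ)‖ ≤ K / lam j := by
      intro ζ hζ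
      have h1 := habs ζ hζ
      have h2 := (hgdist j ζ hζ).1
      have h3 := hgd' ζ hζ
      rw [div_eq_mul_inv]
      have hKinv : (0 : ℝ) < K⁻¹ * lam j := by positivity
      calc ‖deriv (f^[k j]) (g j ζ)‖
          = (‖deriv (g j) ζ‖)⁻¹ := by
            exact eq_inv_of_mul_eq_one_left h1
        _ ≤ (K⁻¹ * lam j)⁻¹ := by
            apply inv_anti₀ hKinv h2
        _ = K * (lam j)⁻¹ := by
            rw [mul_inv, inv_inv]
    have hlower : ∀ ζ ∈ ball y η,
        (K * lam j)⁻¹ ≤ ‖deriv (f^[k j]) (g j ζ)‖ := by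
      intro ζ hζ
      have h1 := habs ζ hζ
      have h2 := (hgdist j ζ hζ).2
      have h3 := hgd' ζ hζ
      have h4 : ‖deriv (f^[k j]) (g j ζ)‖
          = (‖deriv (g j) ζ‖)⁻¹ := by
        exact eq_inv_of_mul_eq_one_left h1
      rw [h4]
      exact inv_anti₀ h3 h2
    -- measurability and injectivity of images under g j
    have himg_meas : ∀ T : Set ℂ, T ⊆ ball y η → MeasurableSet T →
        MeasurableSet (g j '' T) := fun T hTsub hT =>
      hT.image_of_continuousOn_injOn (hcont.mono hTsub) ((hginj j).mono hTsub)
    have hinj_iter : ∀ T : Set ℂ, T ⊆ ball y η →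
        Set.InjOn (f^[k j]) (g j '' T) := by
      rintro T hTsub _ ⟨a, ha, rfl⟩ _ ⟨b, hb, rfl⟩ hab
      rw [hginv j a (hTsub ha), hginv j b (hTsub hb)] at hab
      rw [hab]
    have himg_iter : ∀ T : Set ℂ, T ⊆ ball y η → f^[k j] '' (g j '' T) = T := by
      intro T hTsub
      rw [Set.image_image]
      have : ∀ ζ ∈ T, f^[k j] (g j ζ) = ζ := fun ζ hζ => hginv j ζ (hTsub hζ)
      calc (fun ζ => f^[k j] (g j ζ)) '' T = id '' T := Set.image_congr this
        _ = T := Set.image_id T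
    -- (i) lower bound on μ (ball x (r j) \ A)
    have hbd1 : ENNReal.ofReal ((lam j / K) ^ δ * c) ≤ μ (ball x (r j) \ A) := by
      set E := ball y (η / 2) \ A with hE
      have hEmeas : MeasurableSet E := measurableSet_ball.diff hA
      have hEsub : E ⊆ ball y η :=
        (Set.diff_subset).trans (ball_subset_ball (by linarith))
      set T := g j '' E with hT
      have hTmeas : MeasurableSet T := himg_meas E hEsub hEmeas
      have hμE : μ E = ∫⁻ z in T, confDens δ (f^[k j]) z ∂μ := by
        rw [← himg_iter E hEsub]
        exact conformal_iterate hf hδ hμ (k j) T hTmeas (hinj_iter E hEsub)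
      have hintle : ∫⁻ z in T, confDens δ (f^[k j]) z ∂μ
          ≤ ENNReal.ofReal ((K / lam j) ^ δ) * μ T := by
        calc ∫⁻ z in T, confDens δ (f^[k j]) z ∂μ
            ≤ ∫⁻ _ in T, ENNReal.ofReal ((K / lam j) ^ δ) ∂μ := by
              apply setLIntegral_mono measurable_const
              rintro z ⟨ζ, hζ, rfl⟩
              apply ENNReal.ofReal_le_ofReal
              exact Real.rpow_le_rpow (norm_nonneg _)
                (hupper ζ (hEsub hζ)) hδ.le
          _ = ENNReal.ofReal ((K / lam j) ^ δ) * μ T := setLIntegral_const T _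
      have hcT : ENNReal.ofReal c
          ≤ ENNReal.ofReal ((K / lam j) ^ δ) * μ T :=
        (hmeas j).trans (hμE.le.trans hintle)
      have hcancel : (K / lam j) ^ δ * ((lam j / K) ^ δ * c) = c := by
        rw [← mul_assoc, ← Real.mul_rpow (by positivity) (by positivity)]
        have : K / lam j * (lam j / K) = 1 := by field_simp
        rw [this, Real.one_rpow, one_mul]
      have hane : ENNReal.ofReal ((K / lam j) ^ δ) ≠ 0 := by
        simp only [ne_eq, ENNReal.ofReal_eq_zero, not_le]
        positivity
      have hatop : ENNReal.ofReal ((K / lam j) ^ δ) ≠ ⊤ := ENNReal.ofReal_ne_top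
      have hTlow : ENNReal.ofReal ((lam j / K) ^ δ * c) ≤ μ T := by
        rw [← ENNReal.mul_le_mul_iff_right hane hatop, ← ENNReal.ofReal_mul (by positivity),
          hcancel]
        exact hcT
      refine hTlow.trans (measure_mono ?_)
      rintro _ ⟨ζ, hζ, rfl⟩
      refine ⟨(hgball j).1 ⟨ζ, hζ.1, rfl⟩, ?_⟩
      intro hgA
      have : f^[k j] (g j ζ) ∈ A := iterate_mem_of_forward_invariant hAinv (k j) hgA
      rw [hginv j ζ (hEsub hζ)] at this
      exact hζ.2 this
    -- (ii) upper bound on μ (ball x (r j))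
    have hbd2 : μ (ball x (r j)) ≤ ENNReal.ofReal ((K * lam j) ^ δ) := by
      set G := g j '' ball y η with hG
      have hGmeas : MeasurableSet G :=
        himg_meas _ (subset_refl _) measurableSet_ball
      have hμG : μ (ball y η) = ∫⁻ z in G, confDens δ (f^[k j]) z ∂μ := by
        rw [← himg_iter (ball y η) (subset_refl _)]
        exact conformal_iterate hf hδ hμ (k j) G hGmeas (hinj_iter _ (subset_refl _))
      have hintge : ENNReal.ofReal (((K * lam j)⁻¹) ^ δ) * μ G
          ≤ ∫⁻ z in G, confDens δ (f^[k j]) z ∂μ := by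
        calc ENNReal.ofReal (((K * lam j)⁻¹) ^ δ) * μ G
            = ∫⁻ _ in G, ENNReal.ofReal (((K * lam j)⁻¹) ^ δ) ∂μ :=
              (setLIntegral_const G _).symm
          _ ≤ ∫⁻ z in G, confDens δ (f^[k j]) z ∂μ := by
              apply setLIntegral_mono (confDens_measurable hδ.le _)
              rintro z ⟨ζ, hζ, rfl⟩
              apply ENNReal.ofReal_le_ofReal
              exact Real.rpow_le_rpow (by positivity) (hlower ζ hζ) hδ.le
      have h1 : ENNReal.ofReal (((K * lam j)⁻¹) ^ δ) * μ G ≤ 1 :=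
        hintge.trans (hμG.symm.le.trans prob_le_one)
      have hane : ENNReal.ofReal (((K * lam j)⁻¹) ^ δ) ≠ 0 := by
        simp only [ne_eq, ENNReal.ofReal_eq_zero, not_le]
        positivity
      have hatop : ENNReal.ofReal (((K * lam j)⁻¹) ^ δ) ≠ ⊤ := ENNReal.ofReal_ne_top
      have hGle : μ G ≤ ENNReal.ofReal ((K * lam j) ^ δ) := by
        rw [← ENNReal.mul_le_mul_iff_right hane hatop, ← ENNReal.ofReal_mul (by positivity),
          ← Real.mul_rpow (by positivity) (by positivity)]
        have h2 : (K * lam j)⁻¹ * (K * lam j) = 1 := by field_simp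
        rw [h2, Real.one_rpow]
        exact h1.trans_eq ENNReal.ofReal_one.symm
      exact (measure_mono (hgball j).2).trans hGle
    -- combine
    have hdivle : ENNReal.ofReal ((lam j / K) ^ δ * c) / ENNReal.ofReal ((K * lam j) ^ δ)
        ≤ μ (ball x (r j) \ A) / μ (ball x (r j)) :=
      ENNReal.div_le_div hbd1 hbd2
    refine le_trans (le_of_eq ?_) hdivle
    rw [← ENNReal.ofReal_div_of_pos (by positivity)]
    congr 1
    have hKδ : (0 : ℝ) < K ^ δ := Real.rpow_pos_of_pos hK0 δ
    have hlδ : (0 : ℝ) < lam j ^ δ := Real.rpow_pos_of_pos hlp δ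
    rw [Real.div_rpow hlp.le hK0.le, Real.mul_rpow hK0.le hlp.le]
    rw [show -(2 * δ) = -(δ + δ) by ring, Real.rpow_neg hK0.le,
      Real.rpow_add hK0]
    field_simp
  -- r j tends to 0 within Ioi 0
  have hrt : Tendsto r atTop (nhdsWithin 0 (Set.Ioi 0)) := by
    apply tendsto_nhdsWithin_of_tendsto_nhds_of_eventually_within
    · have : Tendsto (fun j => K * lam j * η / 2) atTop (nhds (K * 0 * η / 2)) := by
        exact ((hlam0.const_mul K).mul_const η).div_const 2
      simpa using this
    · exact Eventually.of_forall fun j => hrpos j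
  -- first conclusion
  have hfirst : ENNReal.ofReal (K ^ (-(2 * δ)) * c) ≤
      limsup (fun r : ℝ => μ (ball x r \ A) / μ (ball x r)) (nhdsWithin 0 (Set.Ioi 0)) := by
    apply le_limsup_of_frequently_le'
    exact hrt.frequently (Frequently.of_forall key)
  refine ⟨hfirst, ?_⟩
  -- second conclusion
  intro H
  set ε := ENNReal.ofReal (K ^ (-(2 * δ)) * c) with hε
  have hεpos : ε ≠ 0 := by
    simp only [hε, ne_eq, ENNReal.ofReal_eq_zero, not_le]
    have : (0 : ℝ) < K ^ (-(2 * δ)) := Real.rpow_pos_of_pos hK0 _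
    positivity
  have hcomp : Tendsto (fun j => μ (ball x (r j) ∩ A) / μ (ball x (r j))) atTop (nhds 1) :=
    H.comp hrt
  have hub : ∀ j, μ (ball x (r j) ∩ A) / μ (ball x (r j)) ≤ 1 - ε := by
    intro j
    have hsum : μ (ball x (r j) ∩ A) / μ (ball x (r j))
        + μ (ball x (r j) \ A) / μ (ball x (r j)) ≤ 1 := by
      rw [ENNReal.div_add_div_same, measure_inter_add_diff _ hA]
      exact ENNReal.div_self_le_one
    have h2 : μ (ball x (r j) ∩ A) / μ (ball x (r j)) + ε ≤ 1 :=
      le_trans (add_le_add le_rfl (key j)) hsum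
    exact ENNReal.le_sub_of_add_le_right ENNReal.ofReal_ne_top h2
  have hle : (1 : ENNReal) ≤ 1 - ε :=
    le_of_tendsto hcomp (Eventually.of_forall hub)
  have : (1 : ENNReal) - ε < 1 :=
    ENNReal.sub_lt_self (by norm_num) (by norm_num) hεpos
  exact absurd (lt_of_le_of_lt hle this) (lt_irrefl _)
end
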